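/- arXiv:1412.1582 — 2 statements merged into one kernel-verified Lean document; each statement's English description precedes it below -/
import Mathlib

section
/- Fix t₀ ∈ ℝ and γ ≠ 0, and for t > t₀ define C₂(t) = γ(t−t₀)^{1/3} + (9/5)(t−t₀) and C₁(t) = C₂(t)(C₂'(t) − 2). Then C₁'(t) + C₁(t)²/C₂(t)² = −8/25 for all t > t₀ with C₂(t) ≠ 0. -/
open Real Set

theorem stmt_8 (t₀ γ : ℝ) (hγ : γ ≠ 0)
    (C₂ : ℝ → ℝ)
    (hC₂ : ∀ t, C₂ t = γ * (t - t₀) ^ ((1:ℝ)/3) + (9/5) * (t - t₀))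
    (C₁ : ℝ → ℝ) (hC₁ : ∀ t, C₁ t = C₂ t * (deriv C₂ t - 2)) :
    ∀ t > t₀, C₂ t ≠ 0 →
      deriv C₁ t + (C₁ t)^2 / (C₂ t)^2 = -8/25 := by
  intro t ht hne
  -- derivative of C₂ at any x > t₀
  have hders : ∀ x, t₀ < x → HasDerivAt C₂
      (γ * ((1/3) * (x - t₀) ^ ((1:ℝ)/3 - 1)) + 9/5) x := by
    intro x hx
    have hu : (0:ℝ) < x - t₀ := by linarith
    have h1 : HasDerivAt (fun y : ℝ => y - t₀) 1 x := by
      simpa using (hasDerivAt_id x).sub_const t₀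
    have h2 : HasDerivAt (fun y : ℝ => (y - t₀) ^ ((1:ℝ)/3))
        (((1:ℝ)/3) * (x - t₀) ^ ((1:ℝ)/3 - 1) * 1) x :=
      by have h := Real.hasDerivAt_rpow_const (p := (1:ℝ)/3) (x := x - t₀) (Or.inl (ne_of_gt hu)); exact h.comp x h1
    have h3 : HasDerivAt (fun y : ℝ => γ * (y - t₀) ^ ((1:ℝ)/3) + (9/5) * (y - t₀))
        (γ * (((1:ℝ)/3) * (x - t₀) ^ ((1:ℝ)/3 - 1) * 1) + (9/5) * 1) x :=
      (h2.const_mul γ).add (h1.const_mul (9/5))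
    have : C₂ = fun y => γ * (y - t₀) ^ ((1:ℝ)/3) + (9/5) * (y - t₀) := funext hC₂
    rw [this]
    convert h3 using 1; ring
  have hu : (0:ℝ) < t - t₀ := by linarith
  -- C₁ agrees with an explicit function on a neighborhood of t
  set φ : ℝ → ℝ := fun x => γ * ((1/3) * (x - t₀) ^ ((1:ℝ)/3 - 1)) + 9/5 with hφ
  set ψ : ℝ → ℝ := fun x =>
    (γ * (x - t₀) ^ ((1:ℝ)/3) + (9/5) * (x - t₀)) * (φ x - 2) with hψ
  have hev : C₁ =ᶠ[nhds t] ψ := by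
    filter_upwards [Ioi_mem_nhds ht] with x hx
    rw [hC₁ x, hC₂ x, (hders x hx).deriv]
  -- derivative of ψ at t
  have hd1 : HasDerivAt (fun y : ℝ => y - t₀) 1 t := by
    simpa using (hasDerivAt_id t).sub_const t₀
  have hdA : HasDerivAt (fun y : ℝ => γ * (y - t₀) ^ ((1:ℝ)/3) + (9/5) * (y - t₀))
      (γ * (((1:ℝ)/3) * (t - t₀) ^ ((1:ℝ)/3 - 1) * 1) + (9/5) * 1) t :=
    (((Real.hasDerivAt_rpow_const (Or.inl (ne_of_gt hu))).comp t hd1).const_mul γ).add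
      (hd1.const_mul (9/5))
  have hdB : HasDerivAt (fun y : ℝ => φ y - 2)
      (γ * ((1/3) * (((1:ℝ)/3 - 1) * (t - t₀) ^ ((1:ℝ)/3 - 1 - 1) * 1))) t := by
    have h2 : HasDerivAt (fun y : ℝ => (y - t₀) ^ ((1:ℝ)/3 - 1))
        (((1:ℝ)/3 - 1) * (t - t₀) ^ ((1:ℝ)/3 - 1 - 1) * 1) t :=
      by have h := Real.hasDerivAt_rpow_const (p := (1:ℝ)/3 - 1) (x := t - t₀) (Or.inl (ne_of_gt hu)); exact h.comp t hd1
    exact (((h2.const_mul (1/3)).const_mul γ).add_const (9/5)).sub_const 2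
  have hdψ : HasDerivAt ψ
      ((γ * (((1:ℝ)/3) * (t - t₀) ^ ((1:ℝ)/3 - 1) * 1) + (9/5) * 1) * (φ t - 2)
        + (γ * (t - t₀) ^ ((1:ℝ)/3) + (9/5) * (t - t₀))
          * (γ * ((1/3) * (((1:ℝ)/3 - 1) * (t - t₀) ^ ((1:ℝ)/3 - 1 - 1) * 1)))) t :=
    hdA.mul hdB
  have hderC₁ : deriv C₁ t =
      (γ * (((1:ℝ)/3) * (t - t₀) ^ ((1:ℝ)/3 - 1) * 1) + (9/5) * 1) * (φ t - 2)
        + (γ * (t - t₀) ^ ((1:ℝ)/3) + (9/5) * (t - t₀))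
          * (γ * ((1/3) * (((1:ℝ)/3 - 1) * (t - t₀) ^ ((1:ℝ)/3 - 1 - 1) * 1))) := by
    rw [hev.deriv_eq, hdψ.deriv]
  -- algebra: introduce s = (t - t₀)^(1/3)
  set s : ℝ := (t - t₀) ^ ((1:ℝ)/3) with hsdef
  have hs : 0 < s := Real.rpow_pos_of_pos hu _
  have e3 : t - t₀ = s ^ 3 := by
    rw [hsdef, ← Real.rpow_natCast ((t - t₀) ^ ((1:ℝ)/3)) 3, ← Real.rpow_mul hu.le]
    norm_num
  have e1 : (t - t₀) ^ ((1:ℝ)/3 - 1) = (s ^ 2)⁻¹ := by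
    have h : s ^ 2 = (t - t₀) ^ ((2:ℝ)/3) := by
      rw [hsdef, ← Real.rpow_natCast ((t - t₀) ^ ((1:ℝ)/3)) 2, ← Real.rpow_mul hu.le]
      norm_num
    rw [h, ← Real.rpow_neg hu.le]
    norm_num
  have e2 : (t - t₀) ^ ((1:ℝ)/3 - 1 - 1) = (s ^ 5)⁻¹ := by
    have h : s ^ 5 = (t - t₀) ^ ((5:ℝ)/3) := by
      rw [hsdef, ← Real.rpow_natCast ((t - t₀) ^ ((1:ℝ)/3)) 5, ← Real.rpow_mul hu.le]
      norm_num
    rw [h, ← Real.rpow_neg hu.le]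
    norm_num
  have hC₂t : C₂ t = γ * s + (9/5) * s ^ 3 := by rw [hC₂ t, ← hsdef, ← e3]
  have hC₁t : C₁ t = C₂ t * (φ t - 2) := by rw [hC₁ t, (hders t ht).deriv]
  have hφt : φ t = γ * ((1/3) * (s ^ 2)⁻¹) + 9/5 := by rw [hφ]; simp only [e1]
  have hne' : γ * s + (9/5) * s ^ 3 ≠ 0 := by rw [← hC₂t]; exact hne
  have hratio : (C₁ t) ^ 2 / (C₂ t) ^ 2 = (φ t - 2) ^ 2 := by
    rw [hC₁t, mul_pow]
    field_simp
  rw [hderC₁, hratio, hφt, e1, e2, e3]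
  have hsne := hs.ne'
  field_simp
  ring
end

section
/- Suppose A₁, A₂ > 0 satisfy A₁' = k₁(A₁/A₂)² + k₃ and A₂' = −A₁/A₂ (parameters k₂ = l₁ = l₃ = 0, l₂ = −1). Then Ric₀₀ − Ric₂₂ = −(4/A₂⁴)·((k₁² + k₁ − 2)A₁² + (k₁k₃ + 2)A₂²). In particular this vanishes identically (with A₁, A₂ linearly independent) only if (k₁,k₃) = (1,−2) or (k₁,k₃) = (−2,1). -/
open Real Set

theorem stmt_14 (k₁ k₃ : ℝ) (A₁ A₂ : ℝ → ℝ)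
    (hd₁ : Differentiable ℝ A₁) (hd₂ : Differentiable ℝ A₂)
    (hp₁ : ∀ t, 0 < A₁ t) (hp₂ : ∀ t, 0 < A₂ t)
    (hA₁' : ∀ t, deriv A₁ t = k₁ * (A₁ t / A₂ t)^2 + k₃)
    (hA₂' : ∀ t, deriv A₂ t = -(A₁ t / A₂ t)) :
    (∀ t, (-2 * deriv (deriv A₁) t / A₁ t - 4 * deriv (deriv A₂) t / A₂ t)
        - (-2 * deriv (deriv A₂) t / A₂ t
            - 2 * deriv A₁ t * deriv A₂ t / (A₁ t * A₂ t)
            - 4 * (A₁ t)^2 / (A₂ t)^4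
            - 2 * (deriv A₂ t)^2 / (A₂ t)^2 + 8 / (A₂ t)^2)
      = -(4 / (A₂ t)^4)
        * ((k₁^2 + k₁ - 2) * (A₁ t)^2 + (k₁ * k₃ + 2) * (A₂ t)^2)) ∧
    ((k₁^2 + k₁ - 2 = 0 ∧ k₁ * k₃ + 2 = 0) →
      (k₁ = 1 ∧ k₃ = -2) ∨ (k₁ = -2 ∧ k₃ = 1)) := by
  constructor
  · intro t
    have h2ne : ∀ s, A₂ s ≠ 0 := fun s => (hp₂ s).ne'
    have h1ne : A₁ t ≠ 0 := (hp₁ t).ne'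
    -- derivative of the ratio r = A₁/A₂
    have hr : ∀ s, HasDerivAt (fun u => A₁ u / A₂ u)
        ((deriv A₁ s * A₂ s - A₁ s * deriv A₂ s) / (A₂ s)^2) s := by
      intro s
      exact ((hd₁ s).hasDerivAt).div ((hd₂ s).hasDerivAt) (h2ne s)
    have hA₂'' : deriv (deriv A₂) t
        = -((deriv A₁ t * A₂ t - A₁ t * deriv A₂ t) / (A₂ t)^2) := by
      have h : deriv A₂ = fun u => -(A₁ u / A₂ u) := funext hA₂'
      conv_lhs => rw [h]
      exact ((hr t).neg).deriv
    have hA₁'' : deriv (deriv A₁) t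
        = k₁ * (2 * (A₁ t / A₂ t) * ((deriv A₁ t * A₂ t - A₁ t * deriv A₂ t) / (A₂ t)^2)) := by
      have h : deriv A₁ = fun u => k₁ * (A₁ u / A₂ u)^2 + k₃ := funext hA₁'
      conv_lhs => rw [h]
      have : HasDerivAt (fun u => k₁ * (A₁ u / A₂ u)^2 + k₃)
          (k₁ * (2 * (A₁ t / A₂ t) * ((deriv A₁ t * A₂ t - A₁ t * deriv A₂ t) / (A₂ t)^2))) t := by
        have := ((hr t).fun_pow 2).const_mul k₁ |>.add_const k₃
        refine this.congr_deriv ?_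
        ring
      exact this.deriv
    rw [hA₁'', hA₂'', hA₁' t, hA₂' t]
    have h2t := h2ne t
    field_simp
    ring
  · rintro ⟨h1, h2⟩
    have : (k₁ - 1) * (k₁ + 2) = 0 := by nlinarith
    rcases mul_eq_zero.mp this with h | h
    · left
      have hk : k₁ = 1 := by linarith
      refine ⟨hk, by nlinarith⟩
    · right
      have hk : k₁ = -2 := by linarith
      refine ⟨hk, by nlinarith⟩
end
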